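/- Let A and B be n × n symmetric PSD matrices and σ² > 0. Then log det(I + σ^{-2}(A + B)) ≤ log det(I + σ^{-2}A) + log det(I + σ^{-2}B). -/

import Mathlib

open Matrix

section Aux

variable {n : ℕ}

open scoped MatrixOrder

/-- Nonnegative scalar multiples of PSD matrices are PSD. -/
lemma psd_smul_aux {A : Matrix (Fin n) (Fin n) ℝ} (hA : A.PosSemidef) {c : ℝ} (hc : 0 ≤ c) :
    (c • A).PosSemidef := by
  refine ⟨?_, fun x => ?_⟩
  · unfold Matrix.IsHermitian
    rw [conjTranspose_smul, hA.1.eq]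
    simp
  · exact (hA.smul hc).2 x

/-- `1 ≤ det (1 + R)` for PSD `R`. -/
lemma one_le_det_one_add_aux {R : Matrix (Fin n) (Fin n) ℝ} (hR : R.PosSemidef) :
    1 ≤ ((1 : Matrix (Fin n) (Fin n) ℝ) + R).det := by
  have hH := hR.1
  set U : Matrix (Fin n) (Fin n) ℝ := (hH.eigenvectorUnitary : Matrix (Fin n) (Fin n) ℝ)
  set D : Matrix (Fin n) (Fin n) ℝ := diagonal (RCLike.ofReal ∘ hH.eigenvalues)
  have hU : U * star U = 1 := mem_unitaryGroup_iff.mp hH.eigenvectorUnitary.2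
  have h1 : (1 : Matrix (Fin n) (Fin n) ℝ) + R = U * (1 + D) * star U := by
    rw [Matrix.mul_add, Matrix.add_mul, Matrix.mul_one, hU]
    congr 1
    exact hH.spectral_theorem
  rw [h1, det_mul_right_comm, hU, Matrix.one_mul]
  have hD : (1 : Matrix (Fin n) (Fin n) ℝ) + D = diagonal (fun i => 1 + hH.eigenvalues i) := by
    rw [← diagonal_one, diagonal_add]
    congr 1
  rw [hD, det_diagonal]
  calc (1 : ℝ) = ∏ _i : Fin n, (1 : ℝ) := by simp
    _ ≤ ∏ i, (1 + hH.eigenvalues i) :=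
      Finset.prod_le_prod (fun i _ => zero_le_one)
        (fun i _ => by linarith [hR.eigenvalues_nonneg i])

/-- `det P ≤ det (P + R)` for `P` positive definite and `R` PSD. -/
lemma det_le_det_add_aux {P R : Matrix (Fin n) (Fin n) ℝ} (hP : P.PosDef) (hR : R.PosSemidef) :
    P.det ≤ (P + R).det := by
  have hPd : IsUnit P.det := hP.det_pos.ne'.isUnit
  have hfact : P + R = P * (1 + P⁻¹ * R) := by
    rw [Matrix.mul_add, Matrix.mul_one, ← Matrix.mul_assoc, mul_nonsing_inv _ hPd,
      Matrix.one_mul]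
  rw [hfact, det_mul]
  set S := CFC.sqrt R with hSdef
  have hs : S * S = R := CFC.sqrt_mul_sqrt_self R hR.nonneg
  have h2 : ((1 : Matrix (Fin n) (Fin n) ℝ) + P⁻¹ * R).det
      = ((1 : Matrix (Fin n) (Fin n) ℝ) + S * (P⁻¹ * S)).det := by
    conv_lhs => rw [← hs]
    rw [← Matrix.mul_assoc, det_one_add_mul_comm]
  have hC : (S * (P⁻¹ * S)).PosSemidef := by
    have h := hP.posSemidef.inv.conjTranspose_mul_mul_same S
    rwa [(CFC.sqrt_nonneg R).posSemidef.1.eq, Matrix.mul_assoc] at h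
  have h3 : 1 ≤ ((1 : Matrix (Fin n) (Fin n) ℝ) + S * (P⁻¹ * S)).det :=
    one_le_det_one_add_aux hC
  rw [h2]
  calc P.det = P.det * 1 := (mul_one _).symm
    _ ≤ P.det * ((1 : Matrix (Fin n) (Fin n) ℝ) + S * (P⁻¹ * S)).det :=
      mul_le_mul_of_nonneg_left h3 hP.det_pos.le

/-- Determinant subadditivity: `det (1 + A + B) ≤ det (1 + A) * det (1 + B)` for PSD `A, B`. -/
lemma det_one_add_add_le_aux {A B : Matrix (Fin n) (Fin n) ℝ}
    (hA : A.PosSemidef) (hB : B.PosSemidef) :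
    ((1 : Matrix (Fin n) (Fin n) ℝ) + (A + B)).det ≤
      ((1 : Matrix (Fin n) (Fin n) ℝ) + A).det * ((1 : Matrix (Fin n) (Fin n) ℝ) + B).det := by
  set M : Matrix (Fin n) (Fin n) ℝ := 1 + A with hMdef
  have hM : M.PosDef := Matrix.PosDef.one.add_posSemidef hA
  have hMd : IsUnit M.det := hM.det_pos.ne'.isUnit
  have hMM : M * M⁻¹ = 1 := mul_nonsing_inv _ hMd
  have h1 : (1 : Matrix (Fin n) (Fin n) ℝ) + (A + B) = M * (1 + M⁻¹ * B) := by
    rw [Matrix.mul_add, Matrix.mul_one, ← Matrix.mul_assoc, hMM, Matrix.one_mul, hMdef,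
      add_assoc]
  rw [h1, det_mul]
  set S := CFC.sqrt B with hSdef
  have hSh : Sᴴ = S := (CFC.sqrt_nonneg B).posSemidef.1.eq
  have hs : S * S = B := CFC.sqrt_mul_sqrt_self B hB.nonneg
  have hMinv : (M⁻¹).PosSemidef := hM.posSemidef.inv
  have h2 : ((1 : Matrix (Fin n) (Fin n) ℝ) + M⁻¹ * B).det
      = ((1 : Matrix (Fin n) (Fin n) ℝ) + S * (M⁻¹ * S)).det := by
    conv_lhs => rw [← hs]
    rw [← Matrix.mul_assoc, det_one_add_mul_comm]
  have hC : (S * (M⁻¹ * S)).PosSemidef := by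
    have h := hMinv.conjTranspose_mul_mul_same S
    rwa [hSh, Matrix.mul_assoc] at h
  -- `1 - M⁻¹` is PSD
  have key : ((1 : Matrix (Fin n) (Fin n) ℝ) - M⁻¹).PosSemidef := by
    have hAA : (A + A * A).PosSemidef :=
      hA.add (by simpa [pow_two] using hA.pow 2)
    have h := hAA.conjTranspose_mul_mul_same M⁻¹
    have e : (M⁻¹)ᴴ * (A + A * A) * M⁻¹ = 1 - M⁻¹ := by
      rw [hMinv.1.eq]
      have hAM : A * M = A + A * A := by rw [hMdef, Matrix.mul_add, Matrix.mul_one]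
      have hMM' : M⁻¹ * M = 1 := nonsing_inv_mul _ hMd
      calc M⁻¹ * (A + A * A) * M⁻¹ = M⁻¹ * (A * M) * M⁻¹ := by rw [hAM]
        _ = M⁻¹ * A * (M * M⁻¹) := by simp only [Matrix.mul_assoc]
        _ = M⁻¹ * A := by rw [hMM, Matrix.mul_one]
        _ = M⁻¹ * (M - 1) := by rw [hMdef]; congr 1; abel
        _ = 1 - M⁻¹ := by rw [Matrix.mul_sub, hMM', Matrix.mul_one]
    rwa [e] at h
  have hBC : (B - S * (M⁻¹ * S)).PosSemidef := by
    have h := key.mul_mul_conjTranspose_same S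
    have e : S * (1 - M⁻¹) * Sᴴ = B - S * (M⁻¹ * S) := by
      rw [hSh, Matrix.mul_sub, Matrix.sub_mul, Matrix.mul_one, hs, Matrix.mul_assoc]
    rwa [e] at h
  have h3 : ((1 : Matrix (Fin n) (Fin n) ℝ) + S * (M⁻¹ * S)).det
      ≤ ((1 : Matrix (Fin n) (Fin n) ℝ) + B).det := by
    have hPD : ((1 : Matrix (Fin n) (Fin n) ℝ) + S * (M⁻¹ * S)).PosDef :=
      Matrix.PosDef.one.add_posSemidef hC
    have h := det_le_det_add_aux hPD hBC
    have e : (1 : Matrix (Fin n) (Fin n) ℝ) + S * (M⁻¹ * S) + (B - S * (M⁻¹ * S)) = 1 + B := by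
      abel
    rwa [e] at h
  rw [h2]
  exact mul_le_mul_of_nonneg_left h3 hM.det_pos.le

end Aux

/-- Subadditivity of the log-determinant information measure:
`log det (I + σ⁻²(A + B)) ≤ log det (I + σ⁻²A) + log det (I + σ⁻²B)`
for PSD matrices `A`, `B`. -/
theorem logdet_subadditive {n : ℕ} (A B : Matrix (Fin n) (Fin n) ℝ)
    (hA : A.PosSemidef) (hB : B.PosSemidef) (σ2 : ℝ) (hσ : 0 < σ2) :
    Real.log ((1 : Matrix (Fin n) (Fin n) ℝ) + σ2⁻¹ • (A + B)).det ≤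
      Real.log ((1 : Matrix (Fin n) (Fin n) ℝ) + σ2⁻¹ • A).det +
      Real.log ((1 : Matrix (Fin n) (Fin n) ℝ) + σ2⁻¹ • B).det := by
  have hc : (0 : ℝ) ≤ σ2⁻¹ := (inv_pos.mpr hσ).le
  have hA' : (σ2⁻¹ • A).PosSemidef := psd_smul_aux hA hc
  have hB' : (σ2⁻¹ • B).PosSemidef := psd_smul_aux hB hc
  have hsum : σ2⁻¹ • (A + B) = σ2⁻¹ • A + σ2⁻¹ • B := smul_add _ _ _
  have hdet := det_one_add_add_le_aux hA' hB'
  rw [hsum]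
  have hxpos : 0 < ((1 : Matrix (Fin n) (Fin n) ℝ) + (σ2⁻¹ • A + σ2⁻¹ • B)).det :=
    (Matrix.PosDef.one.add_posSemidef (hA'.add hB')).det_pos
  have hypos : 0 < ((1 : Matrix (Fin n) (Fin n) ℝ) + σ2⁻¹ • A).det :=
    (Matrix.PosDef.one.add_posSemidef hA').det_pos
  have hzpos : 0 < ((1 : Matrix (Fin n) (Fin n) ℝ) + σ2⁻¹ • B).det :=
    (Matrix.PosDef.one.add_posSemidef hB').det_pos
  calc Real.log ((1 : Matrix (Fin n) (Fin n) ℝ) + (σ2⁻¹ • A + σ2⁻¹ • B)).det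
      ≤ Real.log (((1 : Matrix (Fin n) (Fin n) ℝ) + σ2⁻¹ • A).det *
          ((1 : Matrix (Fin n) (Fin n) ℝ) + σ2⁻¹ • B).det) :=
        Real.log_le_log hxpos hdet
    _ = _ := Real.log_mul hypos.ne' hzpos.ne'
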